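/- Let G be a graph with A ∈ S(G) and B ∈ S(complement of G) satisfying AB = 0, and suppose a_ii = 0 for some vertex i. Then the graph H obtained from G by adding a new vertex j with N_H(j) = N_G(i) (j not adjacent to i) is complementary vanishing. -/
import Mathlib


/-- `A ∈ S(G)`: real symmetric matrix whose off-diagonal nonzero pattern is `E(G)`. -/
def MatIn {V : Type*} [Fintype V] (G : SimpleGraph V) (A : Matrix V V ℝ) : Prop :=
  A.IsSymm ∧ ∀ i j : V, i ≠ j → (A i j ≠ 0 ↔ G.Adj i j)

/-- `G` is complementary vanishing. -/
def CompVan {V : Type*} [Fintype V] (G : SimpleGraph V) : Prop :=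
  ∃ A B : Matrix V V ℝ, MatIn G A ∧ MatIn Gᶜ B ∧ A * B = 0

theorem stmt_9 {n : ℕ} (G : SimpleGraph (Fin n)) (A B : Matrix (Fin n) (Fin n) ℝ)
    (hA : MatIn G A) (hB : MatIn Gᶜ B) (hAB : A * B = 0) (i : Fin n) (hii : A i i = 0)
    (H : SimpleGraph (Fin (n + 1)))
    (hH1 : ∀ x y : Fin n, H.Adj x.castSucc y.castSucc ↔ G.Adj x y)
    (hH2 : ∀ x : Fin n, H.Adj (Fin.last n) x.castSucc ↔ G.Adj i x) :
    CompVan H := by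
  classical
  have hAs : ∀ a b, A b a = A a b := fun a b => congrFun (congrFun hA.1 a) b
  have hBs : ∀ a b, B b a = B a b := fun a b => congrFun (congrFun hB.1 a) b
  set t : ℝ := 1 - B i i with ht
  set e : Fin n → ℝ := fun x => if x = i then 1 else 0 with he
  set c : Fin n → ℝ := fun x => B i x + (if x = i then t else 0) with hcdef
  have hci : c i = 1 := by simp [hcdef, ht]
  have hcne : ∀ x, x ≠ i → c x = B i x := by intro x hx; simp [hcdef, hx]
  set A' : Matrix (Fin (n+1)) (Fin (n+1)) ℝ := Matrix.of fun x y =>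
    Fin.lastCases (Fin.lastCases 0 (fun b => 2 * A i b) y)
      (fun a => Fin.lastCases (2 * A a i) (fun b => A a b) y) x with hA'
  set B' : Matrix (Fin (n+1)) (Fin (n+1)) ℝ := Matrix.of fun x y =>
    Fin.lastCases (Fin.lastCases (-(t/2)) (fun b => c b) y)
      (fun a => Fin.lastCases (c a)
        (fun b => B a b - 2 * e a * c b - 2 * e b * c a + e a * e b * (2*t)) y) x with hB'
  -- entry lemmas
  have hAcc : ∀ a b : Fin n, A' a.castSucc b.castSucc = A a b := by
    intro a b; simp [hA']
  have hAcl : ∀ a : Fin n, A' a.castSucc (Fin.last n) = 2 * A a i := by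
    intro a; simp [hA']
  have hAlc : ∀ b : Fin n, A' (Fin.last n) b.castSucc = 2 * A i b := by
    intro b; simp [hA']
  have hAll : A' (Fin.last n) (Fin.last n) = 0 := by simp [hA']
  have hBcc : ∀ a b : Fin n, B' a.castSucc b.castSucc
      = B a b - 2 * e a * c b - 2 * e b * c a + e a * e b * (2*t) := by
    intro a b; simp [hB']
  have hBcl : ∀ a : Fin n, B' a.castSucc (Fin.last n) = c a := by intro a; simp [hB']
  have hBlc : ∀ b : Fin n, B' (Fin.last n) b.castSucc = c b := by intro b; simp [hB']
  have hBll : B' (Fin.last n) (Fin.last n) = -(t/2) := by simp [hB']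
  -- sum lemmas
  have hAB' : ∀ a b, (∑ z, A a z * B z b) = 0 := by
    intro a b
    have := congrFun (congrFun hAB a) b
    rwa [Matrix.mul_apply] at this
  have hAe : ∀ a, (∑ z, A a z * e z) = A a i := by
    intro a; simp [he, mul_ite, mul_one, mul_zero, Finset.sum_ite_eq']
  have hAc : ∀ a, (∑ z, A a z * c z) = t * A a i := by
    intro a
    have : (∑ z, A a z * c z) = (∑ z, A a z * B z i) + ∑ z, A a z * (if z = i then t else 0) := by
      rw [← Finset.sum_add_distrib]
      refine Finset.sum_congr rfl fun z _ => ?_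
      rw [hcdef]; simp only [hBs z i]; ring
    rw [this, hAB']
    simp [mul_ite, mul_zero, Finset.sum_ite_eq', mul_comm]
  have hlast : ∀ a : Fin n, a.castSucc ≠ Fin.last n := fun a => (Fin.castSucc_lt_last a).ne
  refine ⟨A', B', ⟨?_, ?_⟩, ⟨?_, ?_⟩, ?_⟩
  · -- A' symmetric
    ext x y
    rw [Matrix.transpose_apply]
    induction x using Fin.lastCases with
    | last => induction y using Fin.lastCases with
      | last => rfl
      | cast b => rw [hAcl, hAlc, hAs]
    | cast a => induction y using Fin.lastCases with
      | last => rw [hAcl, hAlc, hAs]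
      | cast b => rw [hAcc, hAcc, hAs]
  · -- A' pattern
    intro x y hxy
    induction x using Fin.lastCases with
    | last => induction y using Fin.lastCases with
      | last => exact absurd rfl hxy
      | cast b =>
        rw [hAlc, hH2]
        rcases eq_or_ne b i with hbi | hbi
        · rw [hbi]; simp [hii]
        · rw [mul_ne_zero_iff, and_iff_right (by norm_num : (2:ℝ) ≠ 0)]
          exact hA.2 i b (Ne.symm hbi)
    | cast a => induction y using Fin.lastCases with
      | last =>
        rw [hAcl, H.adj_comm, hH2]
        rcases eq_or_ne a i with hai | hai
        · rw [hai]; simp [hii]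
        · rw [mul_ne_zero_iff, and_iff_right (by norm_num : (2:ℝ) ≠ 0),
            show G.Adj i a ↔ G.Adj a i from G.adj_comm i a]
          exact hA.2 a i hai
      | cast b =>
        have hab : a ≠ b := fun h => hxy (by rw [h])
        rw [hAcc, hH1]; exact hA.2 a b hab
  · -- B' symmetric
    ext x y
    rw [Matrix.transpose_apply]
    induction x using Fin.lastCases with
    | last => induction y using Fin.lastCases with
      | last => rfl
      | cast b => rw [hBcl, hBlc]
    | cast a => induction y using Fin.lastCases with
      | last => rw [hBcl, hBlc]
      | cast b => rw [hBcc, hBcc, hBs]; ring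
  · -- B' pattern
    intro x y hxy
    induction x using Fin.lastCases with
    | last => induction y using Fin.lastCases with
      | last => exact absurd rfl hxy
      | cast b =>
        rw [hBlc, SimpleGraph.compl_adj]
        rcases eq_or_ne b i with hbi | hbi
        · rw [hbi, hci]
          exact iff_of_true one_ne_zero
            ⟨fun h => hlast i h.symm, fun h => G.irrefl ((hH2 i).mp h)⟩
        · rw [hcne b hbi, hB.2 i b (Ne.symm hbi), SimpleGraph.compl_adj, hH2]
          constructor
          · intro h; exact ⟨fun hc => hlast b hc.symm, h.2⟩
          · intro h; exact ⟨Ne.symm hbi, h.2⟩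
    | cast a => induction y using Fin.lastCases with
      | last =>
        rw [hBcl, SimpleGraph.compl_adj]
        rcases eq_or_ne a i with hai | hai
        · rw [hai, hci]
          exact iff_of_true one_ne_zero
            ⟨hlast i, fun h => G.irrefl ((hH2 i).mp ((H.adj_comm _ _).mp h))⟩
        · rw [hcne a hai, hB.2 i a (Ne.symm hai), SimpleGraph.compl_adj,
            H.adj_comm a.castSucc (Fin.last n), hH2]
          constructor
          · intro h; exact ⟨hlast a, h.2⟩
          · intro h; exact ⟨Ne.symm hai, h.2⟩
      | cast b =>
        have hab : a ≠ b := fun h => hxy (by rw [h])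
        rw [hBcc, SimpleGraph.compl_adj, hH1]
        simp only [ne_eq, Fin.castSucc_inj]
        rcases eq_or_ne a i with hai | hai
        · have hbi : b ≠ i := fun h => hab (by rw [hai, h])
          rw [hai]
          have h1 : e i = 1 := by simp [he]
          have h2 : e b = 0 := by simp [he, hbi]
          rw [h1, h2, hcne b hbi]
          have hsimp : B i b - 2 * 1 * B i b - 2 * 0 * c i + 1 * 0 * (2*t) = -(B i b) := by ring
          rw [hsimp, neg_eq_zero, ← ne_eq, hB.2 i b (Ne.symm hbi), SimpleGraph.compl_adj]
        · rcases eq_or_ne b i with hbi | hbi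
          · rw [hbi]
            have h1 : e i = 1 := by simp [he]
            have h2 : e a = 0 := by simp [he, hai]
            rw [h1, h2, hcne a hai]
            have hsimp : B a i - 2 * 0 * c i - 2 * 1 * B i a + 0 * 1 * (2*t) = -(B i a) := by
              rw [hBs i a]; ring
            rw [hsimp, neg_eq_zero, ← ne_eq, hB.2 i a (Ne.symm hai), SimpleGraph.compl_adj]
            constructor
            · intro h; exact ⟨hai, fun hg => h.2 ((G.adj_comm i a).mpr hg)⟩
            · intro h; exact ⟨Ne.symm hai, fun hg => h.2 ((G.adj_comm a i).mpr hg)⟩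
          · have h1 : e a = 0 := by simp [he, hai]
            have h2 : e b = 0 := by simp [he, hbi]
            rw [h1, h2]
            have hsimp : B a b - 2 * 0 * c b - 2 * 0 * c a + 0 * 0 * (2*t) = B a b := by ring
            rw [hsimp, ← ne_eq, hB.2 a b hab, SimpleGraph.compl_adj]
  · -- product is zero
    ext x y
    rw [Matrix.mul_apply, Matrix.zero_apply, Fin.sum_univ_castSucc]
    induction x using Fin.lastCases with
    | last => induction y using Fin.lastCases with
      | last =>
        rw [hAll, hBll]
        have : (∑ z : Fin n, A' (Fin.last n) z.castSucc * B' z.castSucc (Fin.last n))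
            = ∑ z, 2 * (A i z * c z) := by
          refine Finset.sum_congr rfl fun z _ => ?_
          rw [hAlc, hBcl]; ring
        rw [this, ← Finset.mul_sum, hAc, hii]
        ring
      | cast b =>
        rw [hAll, hBlc]
        have : (∑ z : Fin n, A' (Fin.last n) z.castSucc * B' z.castSucc b.castSucc)
            = 2 * (∑ z, A i z * B z b) - (4 * c b) * (∑ z, A i z * e z)
              - (4 * e b) * (∑ z, A i z * c z) + (4 * t * e b) * (∑ z, A i z * e z) := by
          rw [Finset.mul_sum, Finset.mul_sum, Finset.mul_sum, Finset.mul_sum,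
            ← Finset.sum_sub_distrib, ← Finset.sum_sub_distrib, ← Finset.sum_add_distrib]
          refine Finset.sum_congr rfl fun z _ => ?_
          rw [hAlc, hBcc]; ring
        rw [this, hAB', hAe, hAc, hii]
        ring
    | cast a => induction y using Fin.lastCases with
      | last =>
        rw [hAcl, hBll]
        have : (∑ z : Fin n, A' a.castSucc z.castSucc * B' z.castSucc (Fin.last n))
            = ∑ z, A a z * c z := by
          refine Finset.sum_congr rfl fun z _ => ?_
          rw [hAcc, hBcl]
        rw [this, hAc]
        ring
      | cast b =>
        rw [hAcl, hBlc]
        have : (∑ z : Fin n, A' a.castSucc z.castSucc * B' z.castSucc b.castSucc)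
            = (∑ z, A a z * B z b) - 2 * c b * (∑ z, A a z * e z)
              - 2 * e b * (∑ z, A a z * c z) + e b * (2*t) * (∑ z, A a z * e z) := by
          rw [Finset.mul_sum, Finset.mul_sum, Finset.mul_sum, ← Finset.sum_sub_distrib,
            ← Finset.sum_sub_distrib, ← Finset.sum_add_distrib]
          refine Finset.sum_congr rfl fun z _ => ?_
          rw [hAcc, hBcc]; ring
        rw [this, hAB', hAe, hAc]
        ring
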